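/- Assume the misclassified probability mass satisfies Σ_{t∈R̂∩G} P(t) + Σ_{t∈Ĝ∩R} P(t) ≤ ε₁ with 0 ≤ ε₁ ≤ 1, and |δ − δ̂| ≤ ε₂ with ε₂ ≥ 0. Then A ≤ e^{ε₂}·(1 − ε₁) + e^{δ}·ε₁. -/
import Mathlib


open Finset

/-- Upper bound on the normalizer `A` of the post-removal distribution. -/
theorem A_upper_bound
    {V : Type*} [Fintype V] [DecidableEq V]
    (P : V → ℝ) (G Ghat : Finset V) (δ δhat : ℝ)
    (hP0 : ∀ t, 0 ≤ P t) (hP1 : ∑ t, P t = 1) (hδ : 0 < δ) (hδhat : 0 < δhat)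
    (A : ℝ)
    (hA : A = ∑ t ∈ Ghatᶜ ∩ Gᶜ, P t + Real.exp δ * ∑ t ∈ Ghatᶜ ∩ G, P t
        + Real.exp (-δhat) * ∑ t ∈ Ghat ∩ Gᶜ, P t
        + Real.exp (δ - δhat) * ∑ t ∈ Ghat ∩ G, P t)
    (ε₁ ε₂ : ℝ) (hε₁0 : 0 ≤ ε₁) (hε₁1 : ε₁ ≤ 1) (hε₂0 : 0 ≤ ε₂)
    (hmis : ∑ t ∈ Ghatᶜ ∩ G, P t + ∑ t ∈ Ghat ∩ Gᶜ, P t ≤ ε₁)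
    (hδδ : |δ - δhat| ≤ ε₂) :
    A ≤ Real.exp ε₂ * (1 - ε₁) + Real.exp δ * ε₁ := by
  set a := ∑ t ∈ Ghatᶜ ∩ Gᶜ, P t with ha
  set b := ∑ t ∈ Ghatᶜ ∩ G, P t with hb
  set c := ∑ t ∈ Ghat ∩ Gᶜ, P t with hc
  set d := ∑ t ∈ Ghat ∩ G, P t with hd
  have ha0 : 0 ≤ a := Finset.sum_nonneg fun t _ => hP0 t
  have hb0 : 0 ≤ b := Finset.sum_nonneg fun t _ => hP0 t
  have hc0 : 0 ≤ c := Finset.sum_nonneg fun t _ => hP0 t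
  have hd0 : 0 ≤ d := Finset.sum_nonneg fun t _ => hP0 t
  -- partition: a + b + c + d = 1
  have e1 : ∀ s : Finset V, s ∩ Gᶜ = s \ G := by
    intro s; ext x; simp
  have hsplit1 : d + c = ∑ t ∈ Ghat, P t := by
    rw [hd, hc, e1]
    exact Finset.sum_inter_add_sum_sdiff Ghat G P
  have hsplit2 : b + a = ∑ t ∈ Ghatᶜ, P t := by
    rw [hb, ha, e1]
    exact Finset.sum_inter_add_sum_sdiff Ghatᶜ G P
  have hsum : a + b + c + d = 1 := by
    have := Finset.sum_add_sum_compl Ghat P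
    rw [hP1] at this
    linarith [this, hsplit1, hsplit2]
  -- exp bounds
  have h1δ : (1:ℝ) ≤ Real.exp δ := by
    simpa using Real.exp_le_exp.mpr hδ.le
  have h1ε : (1:ℝ) ≤ Real.exp ε₂ := by
    simpa using Real.exp_le_exp.mpr hε₂0
  have hnegδhat : Real.exp (-δhat) ≤ 1 := by
    simpa using Real.exp_le_exp.mpr (by linarith : -δhat ≤ 0)
  have hdm1 : Real.exp (δ - δhat) ≤ Real.exp δ :=
    Real.exp_le_exp.mpr (by linarith)
  have hdm2 : Real.exp (δ - δhat) ≤ Real.exp ε₂ :=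
    Real.exp_le_exp.mpr (by linarith [abs_le.mp hδδ])
  have hep : 0 < Real.exp δ := Real.exp_pos δ
  rcases le_total δ ε₂ with hle | hle
  · -- e^δ ≤ e^{ε₂}: bound A ≤ e^δ
    have hee : Real.exp δ ≤ Real.exp ε₂ := Real.exp_le_exp.mpr hle
    have hAle : A ≤ Real.exp δ := by
      rw [hA]
      have : a + Real.exp δ * b + Real.exp (-δhat) * c + Real.exp (δ - δhat) * d
          ≤ Real.exp δ * a + Real.exp δ * b + Real.exp δ * c + Real.exp δ * d := by
        have h1 : a ≤ Real.exp δ * a := le_mul_of_one_le_left ha0 h1δ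
        have h2 : Real.exp (-δhat) * c ≤ Real.exp δ * c :=
          mul_le_mul_of_nonneg_right (hnegδhat.trans h1δ) hc0
        have h3 : Real.exp (δ - δhat) * d ≤ Real.exp δ * d :=
          mul_le_mul_of_nonneg_right hdm1 hd0
        linarith
      calc a + Real.exp δ * b + Real.exp (-δhat) * c + Real.exp (δ - δhat) * d
          ≤ Real.exp δ * a + Real.exp δ * b + Real.exp δ * c + Real.exp δ * d := this
        _ = Real.exp δ * (a + b + c + d) := by ring
        _ = Real.exp δ := by rw [hsum]; ring
    nlinarith
  · -- e^{ε₂} ≤ e^δ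
    have hee : Real.exp ε₂ ≤ Real.exp δ := Real.exp_le_exp.mpr hle
    have hAle : A ≤ Real.exp ε₂ * (a + d) + Real.exp δ * (b + c) := by
      rw [hA]
      have h1 : a ≤ Real.exp ε₂ * a := le_mul_of_one_le_left ha0 h1ε
      have h2 : Real.exp (-δhat) * c ≤ Real.exp δ * c :=
        mul_le_mul_of_nonneg_right (hnegδhat.trans h1δ) hc0
      have h3 : Real.exp (δ - δhat) * d ≤ Real.exp ε₂ * d :=
        mul_le_mul_of_nonneg_right hdm2 hd0
      linarith
    have hs : b + c ≤ ε₁ := hmis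
    have had : a + d = 1 - (b + c) := by linarith
    nlinarith [mul_nonneg (sub_nonneg.mpr hee) (sub_nonneg.mpr hs)]
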